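/- Let m, p ∈ ℕ and let C : {1,...,m}^p → ℝ be coefficients. Suppose that for every N ∈ ℕ, for all analytic (or smooth, or polynomial-coefficient) vector fields X_1,...,X_m on ℝ^N and every analytic function ψ : ℝ^N → ℝ, the differential operator P(X_1,...,X_m) = Σ_{(k_1,...,k_p)} C(k_1,...,k_p) X_{k_1}X_{k_2}⋯X_{k_p} annihilates ψ at every point. Then all coefficients vanish: C(k_1,...,k_p) = 0 for every (k_1,...,k_p) ∈ {1,...,m}^p. -/
import Mathlib


/-- The action of a vector field (given by its coefficient map `f`) on a scalar
function: `(f·∇)ψ(x) = dψ(x)[f(x)]`. -/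
noncomputable def vfApply {N : ℕ} (f : (Fin N → ℝ) → (Fin N → ℝ)) (ψ : (Fin N → ℝ) → ℝ) :
    (Fin N → ℝ) → ℝ :=
  fun x => fderiv ℝ ψ x (f x)

/-- The vector field `X_i = Σ_{j : k₀ j = i} x_j ∂_{j+1}` on `ℝ^{p+1}`. -/
noncomputable def uvpX {m p : ℕ} (k₀ : Fin p → Fin m) (i : Fin m) :
    (Fin (p+1) → ℝ) → (Fin (p+1) → ℝ) :=
  fun x l => ∑ j : Fin p, (if k₀ j = i ∧ l = Fin.succ j then (1:ℝ) else 0) * x j.castSucc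

lemma uvpX_contDiff {m p : ℕ} (k₀ : Fin p → Fin m) (i : Fin m) :
    ContDiff ℝ ⊤ (uvpX k₀ i) := by
  apply contDiff_pi.2
  intro l
  apply ContDiff.sum
  intro j _
  exact contDiff_const.mul
    ((ContinuousLinearMap.proj (R := ℝ) (φ := fun _ : Fin (p+1) => ℝ) j.castSucc).contDiff)

lemma vfApply_const_mul_proj {N : ℕ} (f : (Fin N → ℝ) → (Fin N → ℝ)) (c : ℝ) (i : Fin N) :
    vfApply f (fun x => c * x i) = fun x => c * f x i := by
  funext x
  show fderiv ℝ (fun x => c * x i) x (f x) = c * f x i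
  have : (fun x : Fin N → ℝ => c * x i)
      = ⇑(c • ContinuousLinearMap.proj (R := ℝ) (φ := fun _ : Fin N => ℝ) i) := rfl
  rw [this, ContinuousLinearMap.fderiv]
  rfl

/-- if the noncommutative polynomial differential operator
`P(X₁,…,X_m) = Σ_k C(k) X_{k₁}⋯X_{k_p}` annihilates every smooth function for
every choice of smooth vector fields in every dimension `N`, then all
coefficients `C(k)` vanish. -/
theorem universal_vanishing_polynomial {m p : ℕ} (C : (Fin p → Fin m) → ℝ)
    (h : ∀ (N : ℕ) (X : Fin m → (Fin N → ℝ) → (Fin N → ℝ)),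
      (∀ j, ContDiff ℝ ⊤ (X j)) →
      ∀ ψ : (Fin N → ℝ) → ℝ, ContDiff ℝ ⊤ ψ →
      ∀ x : Fin N → ℝ,
        ∑ k : Fin p → Fin m,
          C k * (List.foldr (fun j acc => vfApply (X (k j)) acc) ψ
            (List.finRange p)) x = 0) :
    ∀ k : Fin p → Fin m, C k = 0 := by
  intro k₀
  set ψ : (Fin (p+1) → ℝ) → ℝ := fun x => x (Fin.last p) with hψ
  have hψs : ContDiff ℝ ⊤ ψ :=
    (ContinuousLinearMap.proj (R := ℝ) (φ := fun _ : Fin (p+1) => ℝ) (Fin.last p)).contDiff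
  -- key computation of iterated application on suffixes
  have key : ∀ (k : Fin p → Fin m) (d t : ℕ) (_ht : t + d = p),
      List.foldr (fun j acc => vfApply (uvpX k₀ (k j)) acc) ψ
        (List.drop t (List.finRange p))
      = fun x => (if (∀ s : Fin p, t ≤ (s:ℕ) → k s = k₀ s) then (1:ℝ) else 0)
          * x ⟨t, by omega⟩ := by
    intro k d
    induction d with
    | zero =>
      intro t ht
      rw [List.drop_eq_nil_of_le (by simp; omega)]
      have hcond : (∀ s : Fin p, t ≤ (s:ℕ) → k s = k₀ s) :=
        fun s hs => absurd s.isLt (by omega)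
      rw [if_pos hcond]
      funext x
      simp only [List.foldr_nil, hψ, one_mul]
      congr 1
      exact Fin.ext (by simp; omega)
    | succ d ih =>
      intro t ht
      have htlt : t < p := by omega
      have hdrop : List.drop t (List.finRange p)
          = (⟨t, htlt⟩ : Fin p) :: List.drop (t+1) (List.finRange p) := by
        rw [List.drop_eq_getElem_cons (by simpa using htlt)]
        congr 1
        simp [List.getElem_finRange]
      rw [hdrop, List.foldr_cons, ih (t+1) (by omega), vfApply_const_mul_proj]
      funext x
      have hX : uvpX k₀ (k ⟨t, htlt⟩) x ⟨t+1, by omega⟩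
          = (if k₀ ⟨t, htlt⟩ = k ⟨t, htlt⟩ then (1:ℝ) else 0) * x ⟨t, by omega⟩ := by
        rw [uvpX]
        rw [Finset.sum_eq_single (⟨t, htlt⟩ : Fin p)]
        · have heq : ((⟨t+1, by omega⟩ : Fin (p+1)) = Fin.succ ⟨t, htlt⟩) := rfl
          rw [if_congr (and_iff_left heq) rfl rfl]
          rfl
        · intro j _ hj
          have hne : ((⟨t+1, by omega⟩ : Fin (p+1)) ≠ Fin.succ j) := by
            intro hc
            have h2 : t + 1 = (j:ℕ) + 1 := by simpa using congrArg Fin.val hc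
            apply hj; apply Fin.ext; simp only [Fin.val_mk]; omega
          simp [hne]
        · intro hmem; exact absurd (Finset.mem_univ _) hmem
      rw [hX]
      by_cases hQ : k₀ ⟨t, htlt⟩ = k ⟨t, htlt⟩
      · by_cases hP : ∀ s : Fin p, t + 1 ≤ (s:ℕ) → k s = k₀ s
        · have hP1 : ∀ s : Fin p, t ≤ (s:ℕ) → k s = k₀ s := by
            intro s hs
            rcases Nat.eq_or_lt_of_le hs with heq | hlt
            · have : s = ⟨t, htlt⟩ := Fin.ext heq.symm
              rw [this]; exact hQ.symm
            · exact hP s hlt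
          rw [if_pos hP, if_pos hP1, if_pos hQ]; ring
        · have hP1 : ¬ ∀ s : Fin p, t ≤ (s:ℕ) → k s = k₀ s := by
            intro hc; exact hP (fun s hs => hc s (by omega))
          rw [if_neg hP, if_neg hP1]; ring
      · have hP1 : ¬ ∀ s : Fin p, t ≤ (s:ℕ) → k s = k₀ s := by
          intro hc
          exact hQ ((hc ⟨t, htlt⟩ le_rfl).symm)
        rw [if_neg hP1, if_neg hQ]; ring
  have hmain := h (p+1) (uvpX k₀) (uvpX_contDiff k₀) ψ hψs (fun _ => 1)
  have hterm : ∀ k : Fin p → Fin m,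
      C k * (List.foldr (fun j acc => vfApply (uvpX k₀ (k j)) acc) ψ
        (List.finRange p)) (fun _ => 1)
      = C k * (if k = k₀ then 1 else 0) := by
    intro k
    have := key k p 0 (by omega)
    rw [List.drop_zero] at this
    rw [this]
    congr 1
    simp only [Nat.zero_le, forall_const, mul_one]
    exact if_congr ⟨fun hc => funext hc, fun hc s => congrFun hc s⟩ rfl rfl
  rw [Finset.sum_congr rfl (fun k _ => hterm k)] at hmain
  simpa using hmain
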